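/- Let G be obtained from a 5-cycle by attaching pendant edges so that exactly one cycle vertex u has pendant edges (at least one). Then the strong chromatic index of G equals d(u) + 2. -/

import Mathlib

open SimpleGraph

/-- Two edges of `G` are within distance at most 2: they share a vertex, or some edge of `G`
joins an endpoint of one to an endpoint of the other. -/
def EdgesNear {V : Type*} (G : SimpleGraph V) (e f : Sym2 V) : Prop :=
  (∃ x, x ∈ e ∧ x ∈ f) ∨ (∃ x y, x ∈ e ∧ y ∈ f ∧ G.Adj x y)

/-- `c` assigns distinct colours to any two distinct edges of `G` at distance at most 2. -/
def IsStrongEdgeColoringOn {V : Type*} (G : SimpleGraph V) (c : Sym2 V → ℕ) : Prop :=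
  ∀ e ∈ G.edgeSet, ∀ f ∈ G.edgeSet, e ≠ f → EdgesNear G e f → c e ≠ c f

/-- A strong edge-colouring of `G` with `k` colours. -/
def IsStrongEdgeColoring {V : Type*} (G : SimpleGraph V) (k : ℕ) (c : Sym2 V → ℕ) : Prop :=
  (∀ e ∈ G.edgeSet, c e < k) ∧ IsStrongEdgeColoringOn G c

/-- The strong chromatic index of `G`. -/
noncomputable def sci {V : Type*} (G : SimpleGraph V) : ℕ :=
  sInf {k | ∃ c : Sym2 V → ℕ, IsStrongEdgeColoring G k c}

/-- Degree of a vertex (cardinality of its neighbour set). -/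
noncomputable def sdeg {V : Type*} (G : SimpleGraph V) (v : V) : ℕ :=
  (G.neighborSet v).ncard

/-- The graph obtained from the cycle `C_n` (on vertices `Sum.inl i`, `i : Fin n`)
by attaching `p i` pendant edges at the cycle vertex `i` (the pendant neighbours of `i`
are the vertices `Sum.inr ⟨i, x⟩`). -/
def pufferGraph (n : ℕ) (p : Fin n → ℕ) :
    SimpleGraph (Fin n ⊕ Σ i : Fin n, Fin (p i)) :=
  SimpleGraph.fromRel (fun a b =>
    (∃ i j : Fin n, a = Sum.inl i ∧ b = Sum.inl j ∧ (SimpleGraph.cycleGraph n).Adj i j) ∨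
    (∃ (i : Fin n) (x : Fin (p i)), a = Sum.inl i ∧ b = Sum.inr ⟨i, x⟩))

open Classical in
/-- The maximum of `d(u) + d(v)` over the edges `uv` of the cycle of `pufferGraph n p`. -/
noncomputable def maxCycleDegSum (n : ℕ) (p : Fin n → ℕ) : ℕ :=
  Finset.univ.sup fun q : Fin n × Fin n =>
    if (SimpleGraph.cycleGraph n).Adj q.1 q.2 then
      sdeg (pufferGraph n p) (Sum.inl q.1) + sdeg (pufferGraph n p) (Sum.inl q.2)
    else 0
open SimpleGraph

section PufferAux
variable (p : Fin 5 → ℕ) (u : Fin 5)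

lemma puffer_adj_inl_inl {i j : Fin 5} :
    (pufferGraph 5 p).Adj (Sum.inl i) (Sum.inl j) ↔ (SimpleGraph.cycleGraph 5).Adj i j := by
  simp only [pufferGraph, fromRel_adj]
  constructor
  · rintro ⟨hne, (⟨i',j',hi,hj,hadj⟩|⟨i',x,hi,hj⟩)|(⟨i',j',hi,hj,hadj⟩|⟨i',x,hi,hj⟩)⟩ <;>
      first
      | (cases hi; cases hj; first | exact hadj | exact hadj.symm)
      | simp_all
  · intro hadj
    exact ⟨by simp [hadj.ne], Or.inl (Or.inl ⟨i, j, rfl, rfl, hadj⟩)⟩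

lemma puffer_adj_inl_inr {i j : Fin 5} {x : Fin (p j)} :
    (pufferGraph 5 p).Adj (Sum.inl i) (Sum.inr ⟨j, x⟩) ↔ i = j := by
  simp only [pufferGraph, fromRel_adj]
  constructor
  · rintro ⟨hne, (⟨i',j',hi,hj,hadj⟩|⟨i',y,hi,hj⟩)|(⟨i',j',hi,hj,hadj⟩|⟨i',y,hi,hj⟩)⟩ <;> simp_all
  · rintro rfl
    exact ⟨by simp, Or.inl (Or.inr ⟨i, x, rfl, rfl⟩)⟩

lemma puffer_not_adj_inr_inr {a b : Σ i : Fin 5, Fin (p i)} :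
    ¬ (pufferGraph 5 p).Adj (Sum.inr a) (Sum.inr b) := by
  simp only [pufferGraph, fromRel_adj]
  rintro ⟨hne, (⟨i',j',hi,hj,hadj⟩|⟨i',y,hi,hj⟩)|(⟨i',j',hi,hj,hadj⟩|⟨i',y,hi,hj⟩)⟩ <;> simp_all

end PufferAux

def tc : ℕ → ℕ → ℕ
  | 0, 1 => 0 | 1, 0 => 0
  | 1, 2 => 1 | 2, 1 => 1
  | 2, 3 => 4 | 3, 2 => 4
  | 3, 4 => 2 | 4, 3 => 2
  | 4, 0 => 3 | 0, 4 => 3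
  | _, _ => 0

lemma tc_symm : ∀ a b : Fin 5, tc a.val b.val = tc b.val a.val := by decide

lemma tc_le : ∀ a b : Fin 5, tc a.val b.val ≤ 4 := by decide

section PufferAux
variable (p : Fin 5 → ℕ) (u : Fin 5)

lemma ucan {a b : Fin 5} : u + a = u + b ↔ a = b :=
  ⟨fun h => by simpa using add_left_cancel h, fun h => by rw [h]⟩

lemma ucan0 {a : Fin 5} : u + a = u ↔ a = 0 := by
  constructor
  · intro h; exact ucan u |>.1 (by simpa using h)
  · rintro rfl; simp

lemma uadj {a b : Fin 5} :
    (SimpleGraph.cycleGraph 5).Adj (u + a) (u + b) ↔ (SimpleGraph.cycleGraph 5).Adj a b := by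
  show (SimpleGraph.cycleGraph (3+2)).Adj (u + a) (u + b) ↔ (SimpleGraph.cycleGraph (3+2)).Adj a b
  rw [cycleGraph_adj, cycleGraph_adj, add_sub_add_left_eq_sub, add_sub_add_left_eq_sub]

lemma uadj0l {b : Fin 5} :
    (SimpleGraph.cycleGraph 5).Adj u (u + b) ↔ (SimpleGraph.cycleGraph 5).Adj 0 b := by
  have := uadj (u := u) (a := 0) (b := b); simpa using this

lemma uadj0r {a : Fin 5} :
    (SimpleGraph.cycleGraph 5).Adj (u + a) u ↔ (SimpleGraph.cycleGraph 5).Adj a 0 := by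
  have := uadj (u := u) (a := a) (b := 0); simpa using this

/-- every pendant vertex sits at `u` -/
lemma pendant_eq (h : ∀ i, i ≠ u → p i = 0) (j : Fin 5) (x : Fin (p j)) : j = u := by
  by_contra hj
  exact absurd x.isLt (by simp [h j hj])

/-- the strong edge colouring -/
noncomputable def ccol : Sym2 (Fin 5 ⊕ Σ i : Fin 5, Fin (p i)) → ℕ :=
  Sym2.lift ⟨fun a b =>
    match a, b with
    | Sum.inl i, Sum.inl j => tc (i - u).val (j - u).val
    | Sum.inl _, Sum.inr ⟨_, x⟩ => 4 + x.val
    | Sum.inr ⟨_, x⟩, Sum.inl _ => 4 + x.val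
    | Sum.inr _, Sum.inr _ => 0,
   by rintro (i | ⟨j, x⟩) (i' | ⟨j', x'⟩) <;> simp [tc_symm]⟩

@[simp] lemma ccol_inl_inl {i j : Fin 5} :
    ccol p u s(Sum.inl i, Sum.inl j) = tc (i - u).val (j - u).val := rfl

@[simp] lemma ccol_inl_inr {i j : Fin 5} {x : Fin (p j)} :
    ccol p u s(Sum.inl i, Sum.inr ⟨j, x⟩) = 4 + x.val := rfl

/-- classification of the edges -/
lemma edge_cases (h : ∀ i, i ≠ u → p i = 0) :
    ∀ e ∈ (pufferGraph 5 p).edgeSet,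
      (∃ a : Fin 5, e = s(Sum.inl (u + a), Sum.inl (u + a + 1))) ∨
      (∃ x : Fin (p u), e = s(Sum.inl u, Sum.inr ⟨u, x⟩)) := by
  intro e he
  induction e with
  | h a b =>
    rw [SimpleGraph.mem_edgeSet] at he
    match a, b with
    | Sum.inl i, Sum.inl j =>
      rw [puffer_adj_inl_inl] at he
      rw [cycleGraph_adj'] at he
      rcases he with h1 | h1
      · have hij : i = j + 1 := by
          have h2 : i - j = 1 := by apply Fin.ext; simpa using h1
          rw [← h2]; abel
        refine Or.inl ⟨j - u, ?_⟩
        rw [Sym2.eq_swap]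
        have h2 : u + (j - u) = j := by abel
        rw [h2, hij]
      · have hji : j = i + 1 := by
          have h2 : j - i = 1 := by apply Fin.ext; simpa using h1
          rw [← h2]; abel
        refine Or.inl ⟨i - u, ?_⟩
        have h2 : u + (i - u) = i := by abel
        rw [h2, hji]
    | Sum.inl i, Sum.inr ⟨j, x⟩ =>
      rw [puffer_adj_inl_inr] at he
      obtain rfl := pendant_eq p u h j x
      subst he
      exact Or.inr ⟨x, rfl⟩
    | Sum.inr ⟨j, x⟩, Sum.inl i =>
      rw [SimpleGraph.adj_comm, puffer_adj_inl_inr] at he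
      obtain rfl := pendant_eq p u h j x
      subst he
      exact Or.inr ⟨x, Sym2.eq_swap⟩
    | Sum.inr a, Sum.inr b => exact absurd he (puffer_not_adj_inr_inr p)

end PufferAux

lemma EdgesNear_symm {V : Type*} {G : SimpleGraph V} {e f : Sym2 V}
    (h : EdgesNear G e f) : EdgesNear G f e := by
  rcases h with ⟨z, h1, h2⟩ | ⟨z, w, h1, h2, h3⟩
  exacts [Or.inl ⟨z, h2, h1⟩, Or.inr ⟨w, z, h2, h1, h3.symm⟩]

section PufferAux2
variable (p : Fin 5 → ℕ) (u : Fin 5)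

lemma adj01 : (pufferGraph 5 p).Adj (Sum.inl u) (Sum.inl (u+1)) :=
  (puffer_adj_inl_inl p).2 ((uadj0l u).2 (by decide))

lemma adj04 : (pufferGraph 5 p).Adj (Sum.inl u) (Sum.inl (u+4)) :=
  (puffer_adj_inl_inl p).2 ((uadj0l u).2 (by decide))

lemma adj10 : (pufferGraph 5 p).Adj (Sum.inl (u+1)) (Sum.inl u) :=
  (puffer_adj_inl_inl p).2 ((uadj0r u).2 (by decide))

lemma adj40 : (pufferGraph 5 p).Adj (Sum.inl (u+4)) (Sum.inl u) :=
  (puffer_adj_inl_inl p).2 ((uadj0r u).2 (by decide))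

lemma adjab {a b : Fin 5} (hab : (SimpleGraph.cycleGraph 5).Adj a b) :
    (pufferGraph 5 p).Adj (Sum.inl (u+a)) (Sum.inl (u+b)) :=
  (puffer_adj_inl_inl p).2 ((uadj u).2 hab)

lemma adjpend (x : Fin (p u)) : (pufferGraph 5 p).Adj (Sum.inl u) (Sum.inr ⟨u, x⟩) :=
  (puffer_adj_inl_inr p).2 rfl

/-- the edge `{u+2, u+3}` is not near any pendant edge -/
lemma not_near_pendant (x : Fin (p u)) :
    ¬ EdgesNear (pufferGraph 5 p) s(Sum.inl (u+2), Sum.inl (u+2+1)) s(Sum.inl u, Sum.inr ⟨u, x⟩) := by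
  have h23 : u + 2 + 1 = u + 3 := by rw [add_assoc]; rfl
  rw [h23]
  rintro (⟨z, hz1, hz2⟩ | ⟨z, w, hz, hw, hadj⟩)
  · rw [Sym2.mem_iff] at hz1 hz2
    rcases hz1 with rfl | rfl <;> rcases hz2 with h2 | h2 <;>
      first
      | exact Sum.inl_ne_inr h2
      | (rw [Sum.inl.injEq, ucan0 u] at h2; exact absurd h2 (by decide))
  · rw [Sym2.mem_iff] at hz hw
    rcases hz with rfl | rfl <;> rcases hw with rfl | rfl
    · rw [puffer_adj_inl_inl, uadj0r] at hadj; exact absurd hadj (by decide)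
    · rw [puffer_adj_inl_inr] at hadj
      rw [ucan0 u] at hadj; exact absurd hadj (by decide)
    · rw [puffer_adj_inl_inl, uadj0r] at hadj; exact absurd hadj (by decide)
    · rw [puffer_adj_inl_inr] at hadj
      rw [ucan0 u] at hadj; exact absurd hadj (by decide)

lemma sdeg_eq (h : ∀ i, i ≠ u → p i = 0) :
    sdeg (pufferGraph 5 p) (Sum.inl u) = p u + 2 := by
  classical
  have hset : (pufferGraph 5 p).neighborSet (Sum.inl u) =
      ↑(({Sum.inl (u+1), Sum.inl (u+4)} : Finset (Fin 5 ⊕ Σ i : Fin 5, Fin (p i))) ∪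
        Finset.univ.image fun x : Fin (p u) => Sum.inr ⟨u, x⟩) := by
    ext w
    simp only [SimpleGraph.mem_neighborSet, Finset.coe_union, Set.mem_union, Finset.coe_insert,
      Set.mem_insert_iff, Finset.coe_singleton, Set.mem_singleton_iff, Finset.coe_image,
      Finset.coe_univ, Set.image_univ, Set.mem_range]
    match w with
    | Sum.inl j =>
      rw [puffer_adj_inl_inl]
      obtain ⟨b, rfl⟩ : ∃ b, j = u + b := ⟨j - u, by abel⟩
      rw [uadj0l]
      simp only [Sum.inl.injEq, ucan u]
      constructor
      · intro hb
        left
        have hd : ∀ b : Fin 5, (SimpleGraph.cycleGraph 5).Adj 0 b → b = 1 ∨ b = 4 := by decide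
        exact hd b hb
      · rintro ((rfl | rfl) | ⟨x, hx⟩)
        · decide
        · decide
        · exact absurd hx Sum.inr_ne_inl
    | Sum.inr ⟨j, x⟩ =>
      obtain rfl := pendant_eq p u h j x
      rw [puffer_adj_inl_inr]
      simp
  rw [sdeg, hset, Set.ncard_coe_finset]
  rw [Finset.card_union_of_disjoint (by simp [Finset.disjoint_left])]
  rw [Finset.card_image_of_injective _ (by intro x y hxy; simpa using hxy)]
  rw [Finset.card_insert_of_notMem (by simp only [Finset.mem_singleton, Sum.inl.injEq, ucan u]; decide), Finset.card_singleton]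
  simp [add_comm]

lemma ccol_isStrong (hu : 1 ≤ p u) (h : ∀ i, i ≠ u → p i = 0) :
    IsStrongEdgeColoring (pufferGraph 5 p) (p u + 4) (ccol p u) := by
  have hsub : ∀ a : Fin 5, u + a - u = a := fun a => by abel
  have hsub1 : ∀ a : Fin 5, u + a + 1 - u = a + 1 := fun a => by abel
  have hsub0 : u - u = 0 := by abel
  constructor
  · intro e he
    rcases edge_cases p u h e he with ⟨a, rfl⟩ | ⟨x, rfl⟩
    · rw [ccol_inl_inl, hsub, hsub1]
      have := tc_le a (a + 1)
      omega
    · rw [ccol_inl_inr]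
      have := x.isLt
      omega
  · intro e he f hf hne hnear
    rcases edge_cases p u h e he with ⟨a, rfl⟩ | ⟨x, rfl⟩ <;>
      rcases edge_cases p u h f hf with ⟨b, rfl⟩ | ⟨y, rfl⟩
    · rw [ccol_inl_inl, ccol_inl_inl, hsub, hsub1, hsub, hsub1]
      intro hc
      apply hne
      have tcinj : ∀ a b : Fin 5, tc a.val (a+1).val = tc b.val (b+1).val → a = b := by decide
      rw [tcinj a b hc]
    · rw [ccol_inl_inl, ccol_inl_inr, hsub, hsub1]
      intro hc
      have h2 : ∀ a : Fin 5, tc a.val (a+1).val = 4 → a = 2 := by decide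
      have h1 := tc_le a (a + 1)
      rw [h2 a (by omega)] at hnear
      exact not_near_pendant p u y hnear
    · rw [ccol_inl_inr, ccol_inl_inl, hsub, hsub1]
      intro hc
      have h2 : ∀ b : Fin 5, tc b.val (b+1).val = 4 → b = 2 := by decide
      have h1 := tc_le b (b + 1)
      rw [h2 b (by omega)] at hnear
      exact not_near_pendant p u x (EdgesNear_symm hnear)
    · rw [ccol_inl_inr, ccol_inl_inr]
      intro hc
      apply hne
      have : x = y := Fin.ext (by omega)
      rw [this]

end PufferAux2

section PufferLow
variable (p : Fin 5 → ℕ) (u : Fin 5)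

def Dfun : Fin 4 ⊕ Fin (p u) → Sym2 (Fin 5 ⊕ Σ i : Fin 5, Fin (p i))
  | Sum.inl ⟨0, _⟩ => s(Sum.inl u, Sum.inl (u+1))
  | Sum.inl ⟨1, _⟩ => s(Sum.inl (u+1), Sum.inl (u+2))
  | Sum.inl ⟨2, _⟩ => s(Sum.inl (u+3), Sum.inl (u+4))
  | Sum.inl ⟨3, _⟩ => s(Sum.inl (u+4), Sum.inl u)
  | Sum.inl ⟨n+4, hn⟩ => absurd hn (by omega)
  | Sum.inr x => s(Sum.inl u, Sum.inr ⟨u, x⟩)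

lemma Dfun_mem : ∀ m, Dfun p u m ∈ (pufferGraph 5 p).edgeSet := by
  rintro (⟨i, hi⟩ | x)
  · interval_cases i <;> simp only [Dfun] <;> rw [SimpleGraph.mem_edgeSet]
    · exact adj01 p u
    · exact adjab p u (by decide)
    · exact adjab p u (by decide)
    · exact adj40 p u
  · simp only [Dfun]
    rw [SimpleGraph.mem_edgeSet]
    exact adjpend p u x

lemma Dfun_col : ∀ m, ccol p u (Dfun p u m) =
    Sum.elim (fun i : Fin 4 => (i : ℕ)) (fun x : Fin (p u) => 4 + (x : ℕ)) m := by
  have hsub : ∀ a : Fin 5, u + a - u = a := fun a => by abel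
  have hsub0 : u - u = 0 := by abel
  rintro (⟨i, hi⟩ | x)
  · interval_cases i <;> simp only [Dfun, ccol_inl_inl, Sum.elim_inl, hsub, hsub0] <;> rfl
  · simp only [Dfun, ccol_inl_inr, Sum.elim_inr]

lemma adj23 : (pufferGraph 5 p).Adj (Sum.inl (u+2)) (Sum.inl (u+3)) :=
  adjab p u (by decide)

lemma adj32 : (pufferGraph 5 p).Adj (Sum.inl (u+3)) (Sum.inl (u+2)) :=
  adjab p u (by decide)

lemma Dfun_near : ∀ m m', m ≠ m' →
    EdgesNear (pufferGraph 5 p) (Dfun p u m) (Dfun p u m') := by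
  rintro (⟨i, hi⟩ | x) (⟨j, hj⟩ | y) hmm
  · interval_cases i <;> interval_cases j <;> simp only [Dfun] <;>
      first
      | exact absurd rfl hmm
      | exact Or.inl ⟨_, Sym2.mem_mk_left _ _, Sym2.mem_mk_left _ _⟩
      | exact Or.inl ⟨_, Sym2.mem_mk_left _ _, Sym2.mem_mk_right _ _⟩
      | exact Or.inl ⟨_, Sym2.mem_mk_right _ _, Sym2.mem_mk_left _ _⟩
      | exact Or.inl ⟨_, Sym2.mem_mk_right _ _, Sym2.mem_mk_right _ _⟩
      | exact Or.inr ⟨_, _, Sym2.mem_mk_left _ _, Sym2.mem_mk_left _ _, adj01 p u⟩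
      | exact Or.inr ⟨_, _, Sym2.mem_mk_left _ _, Sym2.mem_mk_right _ _, adj01 p u⟩
      | exact Or.inr ⟨_, _, Sym2.mem_mk_right _ _, Sym2.mem_mk_left _ _, adj01 p u⟩
      | exact Or.inr ⟨_, _, Sym2.mem_mk_right _ _, Sym2.mem_mk_right _ _, adj01 p u⟩
      | exact Or.inr ⟨_, _, Sym2.mem_mk_left _ _, Sym2.mem_mk_left _ _, adj04 p u⟩
      | exact Or.inr ⟨_, _, Sym2.mem_mk_left _ _, Sym2.mem_mk_right _ _, adj04 p u⟩
      | exact Or.inr ⟨_, _, Sym2.mem_mk_right _ _, Sym2.mem_mk_left _ _, adj04 p u⟩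
      | exact Or.inr ⟨_, _, Sym2.mem_mk_right _ _, Sym2.mem_mk_right _ _, adj04 p u⟩
      | exact Or.inr ⟨_, _, Sym2.mem_mk_left _ _, Sym2.mem_mk_left _ _, adj10 p u⟩
      | exact Or.inr ⟨_, _, Sym2.mem_mk_left _ _, Sym2.mem_mk_right _ _, adj10 p u⟩
      | exact Or.inr ⟨_, _, Sym2.mem_mk_right _ _, Sym2.mem_mk_left _ _, adj10 p u⟩
      | exact Or.inr ⟨_, _, Sym2.mem_mk_right _ _, Sym2.mem_mk_right _ _, adj10 p u⟩
      | exact Or.inr ⟨_, _, Sym2.mem_mk_left _ _, Sym2.mem_mk_left _ _, adj40 p u⟩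
      | exact Or.inr ⟨_, _, Sym2.mem_mk_left _ _, Sym2.mem_mk_right _ _, adj40 p u⟩
      | exact Or.inr ⟨_, _, Sym2.mem_mk_right _ _, Sym2.mem_mk_left _ _, adj40 p u⟩
      | exact Or.inr ⟨_, _, Sym2.mem_mk_right _ _, Sym2.mem_mk_right _ _, adj40 p u⟩
      | exact Or.inr ⟨_, _, Sym2.mem_mk_left _ _, Sym2.mem_mk_left _ _, adj23 p u⟩
      | exact Or.inr ⟨_, _, Sym2.mem_mk_left _ _, Sym2.mem_mk_right _ _, adj23 p u⟩
      | exact Or.inr ⟨_, _, Sym2.mem_mk_right _ _, Sym2.mem_mk_left _ _, adj23 p u⟩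
      | exact Or.inr ⟨_, _, Sym2.mem_mk_right _ _, Sym2.mem_mk_right _ _, adj23 p u⟩
      | exact Or.inr ⟨_, _, Sym2.mem_mk_left _ _, Sym2.mem_mk_left _ _, adj32 p u⟩
      | exact Or.inr ⟨_, _, Sym2.mem_mk_left _ _, Sym2.mem_mk_right _ _, adj32 p u⟩
      | exact Or.inr ⟨_, _, Sym2.mem_mk_right _ _, Sym2.mem_mk_left _ _, adj32 p u⟩
      | exact Or.inr ⟨_, _, Sym2.mem_mk_right _ _, Sym2.mem_mk_right _ _, adj32 p u⟩
      | exact Or.inr ⟨_, _, Sym2.mem_mk_left _ _, Sym2.mem_mk_left _ _, adjpend p u _⟩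
      | exact Or.inr ⟨_, _, Sym2.mem_mk_left _ _, Sym2.mem_mk_right _ _, adjpend p u _⟩
      | exact Or.inr ⟨_, _, Sym2.mem_mk_right _ _, Sym2.mem_mk_left _ _, adjpend p u _⟩
      | exact Or.inr ⟨_, _, Sym2.mem_mk_right _ _, Sym2.mem_mk_right _ _, adjpend p u _⟩
  · interval_cases i <;> simp only [Dfun] <;>
      first
      | exact absurd rfl hmm
      | exact Or.inl ⟨_, Sym2.mem_mk_left _ _, Sym2.mem_mk_left _ _⟩
      | exact Or.inl ⟨_, Sym2.mem_mk_left _ _, Sym2.mem_mk_right _ _⟩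
      | exact Or.inl ⟨_, Sym2.mem_mk_right _ _, Sym2.mem_mk_left _ _⟩
      | exact Or.inl ⟨_, Sym2.mem_mk_right _ _, Sym2.mem_mk_right _ _⟩
      | exact Or.inr ⟨_, _, Sym2.mem_mk_left _ _, Sym2.mem_mk_left _ _, adj01 p u⟩
      | exact Or.inr ⟨_, _, Sym2.mem_mk_left _ _, Sym2.mem_mk_right _ _, adj01 p u⟩
      | exact Or.inr ⟨_, _, Sym2.mem_mk_right _ _, Sym2.mem_mk_left _ _, adj01 p u⟩
      | exact Or.inr ⟨_, _, Sym2.mem_mk_right _ _, Sym2.mem_mk_right _ _, adj01 p u⟩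
      | exact Or.inr ⟨_, _, Sym2.mem_mk_left _ _, Sym2.mem_mk_left _ _, adj04 p u⟩
      | exact Or.inr ⟨_, _, Sym2.mem_mk_left _ _, Sym2.mem_mk_right _ _, adj04 p u⟩
      | exact Or.inr ⟨_, _, Sym2.mem_mk_right _ _, Sym2.mem_mk_left _ _, adj04 p u⟩
      | exact Or.inr ⟨_, _, Sym2.mem_mk_right _ _, Sym2.mem_mk_right _ _, adj04 p u⟩
      | exact Or.inr ⟨_, _, Sym2.mem_mk_left _ _, Sym2.mem_mk_left _ _, adj10 p u⟩
      | exact Or.inr ⟨_, _, Sym2.mem_mk_left _ _, Sym2.mem_mk_right _ _, adj10 p u⟩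
      | exact Or.inr ⟨_, _, Sym2.mem_mk_right _ _, Sym2.mem_mk_left _ _, adj10 p u⟩
      | exact Or.inr ⟨_, _, Sym2.mem_mk_right _ _, Sym2.mem_mk_right _ _, adj10 p u⟩
      | exact Or.inr ⟨_, _, Sym2.mem_mk_left _ _, Sym2.mem_mk_left _ _, adj40 p u⟩
      | exact Or.inr ⟨_, _, Sym2.mem_mk_left _ _, Sym2.mem_mk_right _ _, adj40 p u⟩
      | exact Or.inr ⟨_, _, Sym2.mem_mk_right _ _, Sym2.mem_mk_left _ _, adj40 p u⟩
      | exact Or.inr ⟨_, _, Sym2.mem_mk_right _ _, Sym2.mem_mk_right _ _, adj40 p u⟩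
      | exact Or.inr ⟨_, _, Sym2.mem_mk_left _ _, Sym2.mem_mk_left _ _, adj23 p u⟩
      | exact Or.inr ⟨_, _, Sym2.mem_mk_left _ _, Sym2.mem_mk_right _ _, adj23 p u⟩
      | exact Or.inr ⟨_, _, Sym2.mem_mk_right _ _, Sym2.mem_mk_left _ _, adj23 p u⟩
      | exact Or.inr ⟨_, _, Sym2.mem_mk_right _ _, Sym2.mem_mk_right _ _, adj23 p u⟩
      | exact Or.inr ⟨_, _, Sym2.mem_mk_left _ _, Sym2.mem_mk_left _ _, adj32 p u⟩
      | exact Or.inr ⟨_, _, Sym2.mem_mk_left _ _, Sym2.mem_mk_right _ _, adj32 p u⟩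
      | exact Or.inr ⟨_, _, Sym2.mem_mk_right _ _, Sym2.mem_mk_left _ _, adj32 p u⟩
      | exact Or.inr ⟨_, _, Sym2.mem_mk_right _ _, Sym2.mem_mk_right _ _, adj32 p u⟩
      | exact Or.inr ⟨_, _, Sym2.mem_mk_left _ _, Sym2.mem_mk_left _ _, adjpend p u _⟩
      | exact Or.inr ⟨_, _, Sym2.mem_mk_left _ _, Sym2.mem_mk_right _ _, adjpend p u _⟩
      | exact Or.inr ⟨_, _, Sym2.mem_mk_right _ _, Sym2.mem_mk_left _ _, adjpend p u _⟩
      | exact Or.inr ⟨_, _, Sym2.mem_mk_right _ _, Sym2.mem_mk_right _ _, adjpend p u _⟩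
  · interval_cases j <;> simp only [Dfun] <;>
      first
      | exact absurd rfl hmm
      | exact Or.inl ⟨_, Sym2.mem_mk_left _ _, Sym2.mem_mk_left _ _⟩
      | exact Or.inl ⟨_, Sym2.mem_mk_left _ _, Sym2.mem_mk_right _ _⟩
      | exact Or.inl ⟨_, Sym2.mem_mk_right _ _, Sym2.mem_mk_left _ _⟩
      | exact Or.inl ⟨_, Sym2.mem_mk_right _ _, Sym2.mem_mk_right _ _⟩
      | exact Or.inr ⟨_, _, Sym2.mem_mk_left _ _, Sym2.mem_mk_left _ _, adj01 p u⟩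
      | exact Or.inr ⟨_, _, Sym2.mem_mk_left _ _, Sym2.mem_mk_right _ _, adj01 p u⟩
      | exact Or.inr ⟨_, _, Sym2.mem_mk_right _ _, Sym2.mem_mk_left _ _, adj01 p u⟩
      | exact Or.inr ⟨_, _, Sym2.mem_mk_right _ _, Sym2.mem_mk_right _ _, adj01 p u⟩
      | exact Or.inr ⟨_, _, Sym2.mem_mk_left _ _, Sym2.mem_mk_left _ _, adj04 p u⟩
      | exact Or.inr ⟨_, _, Sym2.mem_mk_left _ _, Sym2.mem_mk_right _ _, adj04 p u⟩
      | exact Or.inr ⟨_, _, Sym2.mem_mk_right _ _, Sym2.mem_mk_left _ _, adj04 p u⟩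
      | exact Or.inr ⟨_, _, Sym2.mem_mk_right _ _, Sym2.mem_mk_right _ _, adj04 p u⟩
      | exact Or.inr ⟨_, _, Sym2.mem_mk_left _ _, Sym2.mem_mk_left _ _, adj10 p u⟩
      | exact Or.inr ⟨_, _, Sym2.mem_mk_left _ _, Sym2.mem_mk_right _ _, adj10 p u⟩
      | exact Or.inr ⟨_, _, Sym2.mem_mk_right _ _, Sym2.mem_mk_left _ _, adj10 p u⟩
      | exact Or.inr ⟨_, _, Sym2.mem_mk_right _ _, Sym2.mem_mk_right _ _, adj10 p u⟩
      | exact Or.inr ⟨_, _, Sym2.mem_mk_left _ _, Sym2.mem_mk_left _ _, adj40 p u⟩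
      | exact Or.inr ⟨_, _, Sym2.mem_mk_left _ _, Sym2.mem_mk_right _ _, adj40 p u⟩
      | exact Or.inr ⟨_, _, Sym2.mem_mk_right _ _, Sym2.mem_mk_left _ _, adj40 p u⟩
      | exact Or.inr ⟨_, _, Sym2.mem_mk_right _ _, Sym2.mem_mk_right _ _, adj40 p u⟩
      | exact Or.inr ⟨_, _, Sym2.mem_mk_left _ _, Sym2.mem_mk_left _ _, adj23 p u⟩
      | exact Or.inr ⟨_, _, Sym2.mem_mk_left _ _, Sym2.mem_mk_right _ _, adj23 p u⟩
      | exact Or.inr ⟨_, _, Sym2.mem_mk_right _ _, Sym2.mem_mk_left _ _, adj23 p u⟩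
      | exact Or.inr ⟨_, _, Sym2.mem_mk_right _ _, Sym2.mem_mk_right _ _, adj23 p u⟩
      | exact Or.inr ⟨_, _, Sym2.mem_mk_left _ _, Sym2.mem_mk_left _ _, adj32 p u⟩
      | exact Or.inr ⟨_, _, Sym2.mem_mk_left _ _, Sym2.mem_mk_right _ _, adj32 p u⟩
      | exact Or.inr ⟨_, _, Sym2.mem_mk_right _ _, Sym2.mem_mk_left _ _, adj32 p u⟩
      | exact Or.inr ⟨_, _, Sym2.mem_mk_right _ _, Sym2.mem_mk_right _ _, adj32 p u⟩
      | exact Or.inr ⟨_, _, Sym2.mem_mk_left _ _, Sym2.mem_mk_left _ _, adjpend p u _⟩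
      | exact Or.inr ⟨_, _, Sym2.mem_mk_left _ _, Sym2.mem_mk_right _ _, adjpend p u _⟩
      | exact Or.inr ⟨_, _, Sym2.mem_mk_right _ _, Sym2.mem_mk_left _ _, adjpend p u _⟩
      | exact Or.inr ⟨_, _, Sym2.mem_mk_right _ _, Sym2.mem_mk_right _ _, adjpend p u _⟩
  · simp only [Dfun]
    exact Or.inl ⟨_, Sym2.mem_mk_left _ _, Sym2.mem_mk_left _ _⟩

lemma puffer_lower (k : ℕ) (c : Sym2 (Fin 5 ⊕ Σ i : Fin 5, Fin (p i)) → ℕ)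
    (hc : IsStrongEdgeColoring (pufferGraph 5 p) k c) : p u + 4 ≤ k := by
  obtain ⟨hbd, hst⟩ := hc
  have hinj : Function.Injective
      (fun m : Fin 4 ⊕ Fin (p u) => (⟨c (Dfun p u m), hbd _ (Dfun_mem p u m)⟩ : Fin k)) := by
    intro m m' hmm
    simp only [Fin.mk.injEq] at hmm
    by_contra hne
    have hDne : Dfun p u m ≠ Dfun p u m' := by
      intro hD
      apply hne
      have h1 := Dfun_col p u m
      have h2 := Dfun_col p u m'
      rw [hD, h2] at h1
      rcases m with i | x <;> rcases m' with j | y <;> simp only [Sum.elim_inl, Sum.elim_inr] at h1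
      · exact congrArg Sum.inl (Fin.ext (by omega))
      · exact absurd h1 (by omega)
      · exact absurd h1 (by omega)
      · exact congrArg Sum.inr (Fin.ext (by omega))
    exact absurd hmm (hst _ (Dfun_mem p u m) _ (Dfun_mem p u m') hDne (Dfun_near p u m m' hne))
  have := Fintype.card_le_of_injective _ hinj
  simpa [add_comm] using this

end PufferLow

/-- For a 5-cycle with pendant edges attached at exactly one cycle vertex `u`
(at least one pendant edge), the strong chromatic index equals `d(u) + 2`. -/
theorem sci_C5_one_pendant_vertex (p : Fin 5 → ℕ) (u : Fin 5)
    (hu : 1 ≤ p u) (h : ∀ i, i ≠ u → p i = 0) :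
    sci (pufferGraph 5 p) = sdeg (pufferGraph 5 p) (Sum.inl u) + 2 := by
  rw [sdeg_eq p u h]
  have hup : sci (pufferGraph 5 p) ≤ p u + 4 :=
    Nat.sInf_le ⟨ccol p u, ccol_isStrong p u hu h⟩
  have hlo : p u + 4 ≤ sci (pufferGraph 5 p) :=
    le_csInf ⟨p u + 4, ccol p u, ccol_isStrong p u hu h⟩
      (fun k hk => by obtain ⟨c, hc⟩ := hk; exact puffer_lower p u k c hc)
  omega
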